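/- Let A and B be positive definite p × p complex matrices and let X and Y be p × q complex matrices. Then the q × q matrix (X*A⁻¹X) ∘ (Y*B⁻¹Y) − (X ∘ Y)* (A ∘ B)⁻¹ (X ∘ Y) is positive semidefinite, where M* denotes the conjugate transpose of M. -/

import Mathlib

open Matrix ComplexOrder

private lemma quad_hadamard {n m : Type*} [Fintype n] [Fintype m]
    (A : Matrix n n ℂ) (C : Matrix m n ℂ) (x : n → ℂ) :
    star x ⬝ᵥ (Matrix.hadamard A (Cᴴ * C)) *ᵥ x =
      ∑ k : m, star (fun j => C k j * x j) ⬝ᵥ A *ᵥ (fun j => C k j * x j) := by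
  simp only [dotProduct, mulVec, hadamard_apply, mul_apply, conjTranspose_apply,
    Pi.star_apply, star_mul', Finset.mul_sum, Finset.sum_mul]
  rw [show (∑ i : n, ∑ j : n, ∑ k : m,
      star (x i) * (A i j * (star (C k i) * C k j) * x j)) =
    ∑ i : n, ∑ k : m, ∑ j : n,
      star (x i) * (A i j * (star (C k i) * C k j) * x j) from
    Finset.sum_congr rfl fun i _ => Finset.sum_comm, Finset.sum_comm]
  refine Finset.sum_congr rfl fun k _ => Finset.sum_congr rfl fun i _ =>
    Finset.sum_congr rfl fun j _ => by ring

private lemma hadamard_posSemidef {n : Type*} [Fintype n]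
    {A B : Matrix n n ℂ} (hA : A.PosSemidef) (hB : B.PosSemidef) :
    (Matrix.hadamard A B).PosSemidef := by
  exact hA.hadamard hB

private lemma hadamard_posDef {n : Type*} [Fintype n] [DecidableEq n]
    {A B : Matrix n n ℂ} (hA : A.PosDef) (hB : B.PosDef) :
    (Matrix.hadamard A B).PosDef := by
  exact hA.hadamard hB

private lemma hadamard_fromBlocks {n m : Type*}
    (A B : Matrix n n ℂ) (X Y : Matrix n m ℂ) (Z W : Matrix m n ℂ) (D E : Matrix m m ℂ) :
    Matrix.hadamard (fromBlocks A X Z D) (fromBlocks B Y W E) =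
      fromBlocks (Matrix.hadamard A B) (Matrix.hadamard X Y)
        (Matrix.hadamard Z W) (Matrix.hadamard D E) := by
  ext i j
  cases i <;> cases j <;> rfl

private lemma hadamard_conjTranspose {n m : Type*} (X Y : Matrix n m ℂ) :
    (Matrix.hadamard X Y)ᴴ = Matrix.hadamard Xᴴ Yᴴ := by
  ext i j
  simp [conjTranspose_apply, hadamard_apply]

/-- The key Schur-complement inequality: for positive definite `p × p` matrices
`A, B` and `p × q` matrices `X, Y`,
`(X*A⁻¹X) ∘ (Y*B⁻¹Y) ≥ (X∘Y)* (A∘B)⁻¹ (X∘Y)` in the Löwner order. -/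
theorem hadamard_conj_inv_posSemidef {p q : ℕ}
    (A B : Matrix (Fin p) (Fin p) ℂ) (X Y : Matrix (Fin p) (Fin q) ℂ)
    (hA : A.PosDef) (hB : B.PosDef) :
    (Matrix.hadamard (Xᴴ * A⁻¹ * X) (Yᴴ * B⁻¹ * Y) -
        (Matrix.hadamard X Y)ᴴ * (Matrix.hadamard A B)⁻¹ *
          (Matrix.hadamard X Y)).PosSemidef := by
  haveI := hA.isUnit.invertible
  haveI := hB.isUnit.invertible
  have h1 : (fromBlocks A X Xᴴ (Xᴴ * A⁻¹ * X)).PosSemidef := by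
    rw [PosDef.fromBlocks₁₁ X (Xᴴ * A⁻¹ * X) hA, sub_self]
    exact PosSemidef.zero
  have h2 : (fromBlocks B Y Yᴴ (Yᴴ * B⁻¹ * Y)).PosSemidef := by
    rw [PosDef.fromBlocks₁₁ Y (Yᴴ * B⁻¹ * Y) hB, sub_self]
    exact PosSemidef.zero
  have h3 := hadamard_posSemidef h1 h2
  rw [hadamard_fromBlocks, ← hadamard_conjTranspose] at h3
  have hAB : (Matrix.hadamard A B).PosDef := hadamard_posDef hA hB
  haveI := hAB.isUnit.invertible
  exact (PosDef.fromBlocks₁₁ _ _ hAB).mp h3
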